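/- Let n = 2k with k ≥ 2, identify the vertex set with Z_{2k}, and for each 0 ≤ i ≤ k−1 let H_i be the complete 3-partite 3-graph with parts {i, i+k}, {i+1, ..., i+k−1}, and {i+k+1, ..., i−1} (indices mod 2k). Then every 3-subset of Z_{2k} lies in an odd number of the hypergraphs H_0, ..., H_{k−1}. Moreover, a 3-set containing a pair of opposite points i, i+k lies in exactly one H_j, and a 3-set {0, b, c} with 0 < b < k < c < 2k and no opposite pair lies in three of the H_i if k < c < k+b and in exactly one otherwise. -/
import Mathlib


open Finset

/-- `e` is an edge of the complete `r`-partite `r`-graph with parts `P 0, ..., P (r-1)`: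
it meets every part in exactly one vertex. -/
def IsEdge {α : Type*} [DecidableEq α] {r : ℕ} (P : Fin r → Finset α) (e : Finset α) : Prop :=
  ∀ i, (e ∩ P i).card = 1

instance {α : Type*} [DecidableEq α] {r : ℕ} (P : Fin r → Finset α) (e : Finset α) :
    Decidable (IsEdge P e) :=
  inferInstanceAs (Decidable (∀ _, _))

/-- The circular construction `H_i` on `ZMod (2k)`: parts `{i, i+k}`,
`{i+1, ..., i+k-1}` and `{i+k+1, ..., i-1}`. -/
def circPart (k : ℕ) (i : ZMod (2 * k)) : Fin 3 → Finset (ZMod (2 * k)) :=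
  ![{i, i + (k : ZMod (2 * k))},
    (Finset.Ico 1 k).image fun j : ℕ => i + (j : ZMod (2 * k)),
    (Finset.Ico (k + 1) (2 * k)).image fun j : ℕ => i + (j : ZMod (2 * k))]

def pIdx (k v : ℕ) : Fin 3 := if v = 0 ∨ v = k then 0 else if v < k then 1 else 2

section basics
variable {k : ℕ} (hk : 2 ≤ k)
include hk

lemma neZero2k : NeZero (2 * k) := ⟨by omega⟩

lemma val_k : ((k : ZMod (2 * k))).val = k := by
  haveI := neZero2k hk
  rw [ZMod.val_natCast, Nat.mod_eq_of_lt (by omega)]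

lemma cast_val_zmod (x : ZMod (2 * k)) : ((x.val : ℕ) : ZMod (2 * k)) = x := by
  haveI := neZero2k hk
  exact ZMod.natCast_rightInverse x

lemma val_eq_k_iff (x : ZMod (2 * k)) : x.val = k ↔ x = (k : ZMod (2 * k)) := by
  constructor
  · intro h; rw [← cast_val_zmod hk x, h]
  · intro h; rw [h, val_k hk]

lemma mem_circPart (j x : ZMod (2 * k)) (i : Fin 3) :
    x ∈ circPart k j i ↔ pIdx k ((x - j).val) = i := by
  haveI := neZero2k hk
  have hvlt : (x - j).val < 2 * k := ZMod.val_lt _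
  have h0 : x ∈ circPart k j 0 ↔ pIdx k ((x - j).val) = 0 := by
    show x ∈ ({j, j + (k : ZMod (2*k))} : Finset _) ↔ _
    rw [Finset.mem_insert, Finset.mem_singleton]
    unfold pIdx
    constructor
    · rintro (h | h)
      · have h1 : x - j = 0 := by rw [h]; ring
        simp [h1, ZMod.val_eq_zero]
      · have h1 : x - j = (k:ZMod (2*k)) := by rw [h]; ring
        rw [h1, val_k hk]; simp
    · intro h
      split_ifs at h with hc hlt
      · rcases hc with hc | hc
        · left; have : x - j = 0 := by rwa [← ZMod.val_eq_zero]
          linear_combination this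
        · right
          have : x - j = (k : ZMod (2*k)) := (val_eq_k_iff hk _).1 hc
          linear_combination this
      · simp_all
      · simp_all
  have h1 : x ∈ circPart k j 1 ↔ pIdx k ((x - j).val) = 1 := by
    show x ∈ (Finset.Ico 1 k).image (fun m : ℕ => j + (m : ZMod (2*k))) ↔ _
    rw [Finset.mem_image]
    unfold pIdx
    constructor
    · rintro ⟨m, hm, rfl⟩
      rw [Finset.mem_Ico] at hm
      have h1 : j + (m : ZMod (2*k)) - j = (m : ZMod (2*k)) := by ring
      rw [h1, ZMod.val_natCast, Nat.mod_eq_of_lt (by omega)]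
      have h2 : ¬(m = 0 ∨ m = k) := by omega
      simp [h2, hm.2]
    · intro h
      split_ifs at h with hc hlt
      · simp_all
      · refine ⟨(x - j).val, Finset.mem_Ico.2 ⟨by omega, hlt⟩, ?_⟩
        rw [cast_val_zmod hk]; ring
      · simp_all
  have h2 : x ∈ circPart k j 2 ↔ pIdx k ((x - j).val) = 2 := by
    show x ∈ (Finset.Ico (k+1) (2*k)).image (fun m : ℕ => j + (m : ZMod (2*k))) ↔ _
    rw [Finset.mem_image]
    unfold pIdx
    constructor
    · rintro ⟨m, hm, rfl⟩
      rw [Finset.mem_Ico] at hm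
      have h1 : j + (m : ZMod (2*k)) - j = (m : ZMod (2*k)) := by ring
      rw [h1, ZMod.val_natCast, Nat.mod_eq_of_lt (by omega)]
      have h2 : ¬(m = 0 ∨ m = k) := by omega
      have h3 : ¬ m < k := by omega
      simp [h2, h3]
    · intro h
      split_ifs at h with hc hlt
      · simp_all
      · simp_all
      · refine ⟨(x - j).val, Finset.mem_Ico.2 ⟨by omega, hvlt⟩, ?_⟩
        rw [cast_val_zmod hk]; ring
  fin_cases i
  · exact h0
  · exact h1
  · exact h2

end basics

lemma isEdge_triple {α : Type*} [DecidableEq α] (P : Fin 3 → Finset α) (f : α → Fin 3)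
    (hP : ∀ x i, x ∈ P i ↔ f x = i) {x y z : α}
    (hxy : x ≠ y) (hxz : x ≠ z) (hyz : y ≠ z) :
    IsEdge P {x, y, z} ↔ f x ≠ f y ∧ f x ≠ f z ∧ f y ≠ f z := by
  have key : ∀ i, (({x, y, z} : Finset α) ∩ P i).card =
      (if f x = i then 1 else 0) + (if f y = i then 1 else 0) + (if f z = i then 1 else 0) := by
    intro i
    rw [← Finset.filter_mem_eq_inter, Finset.filter_insert, Finset.filter_insert,
      Finset.filter_singleton]
    simp only [hP]
    split_ifs <;>
      simp [Finset.card_insert_of_notMem, Finset.mem_insert, Finset.mem_singleton, hxy, hxz, hyz]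
  unfold IsEdge
  simp only [key]
  revert hxy
  generalize f x = a; generalize f y = b; generalize f z = c
  intro _
  revert a b c
  decide

lemma mod_cases {m n : ℕ} (hn : 0 < n) (h : m < 3 * n) :
    m % n = if m < n then m else if m < 2 * n then m - n else m - 2 * n := by
  split_ifs with h1 h2
  · exact Nat.mod_eq_of_lt h1
  · rw [Nat.mod_eq_sub_mod (by omega), Nat.mod_eq_of_lt (by omega)]
  · rw [Nat.mod_eq_sub_mod (by omega), Nat.mod_eq_sub_mod (by omega),
      Nat.mod_eq_of_lt (by omega)]
    omega

lemma mod_spec {m n : ℕ} (hn : 0 < n) (h : m < 3 * n) :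
    (m % n = m) ∨ (m % n + n = m) ∨ (m % n + 2 * n = m) := by
  rw [mod_cases hn h]
  split_ifs <;> omega

lemma mod_spec2 {m n : ℕ} (hn : 0 < n) (h : m < 2 * n) :
    (m < n ∧ m % n = m) ∨ (n ≤ m ∧ m % n + n = m) := by
  rcases Nat.lt_or_ge m n with h1 | h1
  · exact Or.inl ⟨h1, Nat.mod_eq_of_lt h1⟩
  · refine Or.inr ⟨h1, ?_⟩
    rw [Nat.mod_eq_sub_mod h1, Nat.mod_eq_of_lt (by omega)]
    omega

lemma pIdx_ne_iff (k v w : ℕ) : pIdx k v ≠ pIdx k w ↔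
    ¬(((v = 0 ∨ v = k) ∧ (w = 0 ∨ w = k)) ∨
      ((¬(v = 0 ∨ v = k)) ∧ (¬(w = 0 ∨ w = k)) ∧ (v < k ↔ w < k))) := by
  unfold pIdx
  split_ifs <;> simp_all <;> omega

lemma pIdx_opp_ne_iff (k : ℕ) {u1 u2 u3 : ℕ} (hk : 0 < k)
    (h1 : u1 < 2*k) (h2 : u2 < 2*k) (h3 : u3 < 2*k)
    (hop : u2 = u1 + k ∨ u1 = u2 + k) :
    (pIdx k u1 ≠ pIdx k u2 ∧ pIdx k u1 ≠ pIdx k u3 ∧ pIdx k u2 ≠ pIdx k u3) ↔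
      (u1 ≠ 0 ∧ u1 ≠ k ∧ (u3 = 0 ∨ u3 = k)) := by
  simp only [pIdx_ne_iff]
  omega

section main
variable {k : ℕ} (hk : 2 ≤ k)
include hk

lemma val_sub_cast (a j : ℕ) (hj : j ≤ 2 * k) :
    ((a : ZMod (2 * k)) - (j : ZMod (2 * k))).val = (a + 2 * k - j) % (2 * k) := by
  haveI := neZero2k hk
  have h1 : (a : ZMod (2 * k)) - (j : ZMod (2 * k)) = ((a + 2 * k - j : ℕ) : ZMod (2 * k)) := by
    have h2 : (a + 2 * k - j : ℕ) + j = a + 2 * k := by omega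
    have h3 : (((a + 2 * k - j : ℕ) : ZMod (2*k))) + (j : ZMod (2*k)) =
        ((a + 2*k : ℕ) : ZMod (2*k)) := by rw [← Nat.cast_add, h2]
    push_cast at h3 ⊢
    have h4 : ((2*k : ℕ) : ZMod (2*k)) = 0 := ZMod.natCast_self _
    push_cast at h4
    linear_combination -h3 - h4
  rw [h1, ZMod.val_natCast]

lemma cast_inj_lt {a b : ℕ} (ha : a < 2 * k) (hb : b < 2 * k) :
    ((a : ZMod (2 * k)) = (b : ZMod (2 * k))) ↔ a = b := by
  haveI := neZero2k hk
  constructor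
  · intro h
    have h2 := congrArg ZMod.val h
    rwa [ZMod.val_natCast, ZMod.val_natCast, Nat.mod_eq_of_lt ha, Nat.mod_eq_of_lt hb] at h2
  · rintro rfl; rfl

lemma isEdge_nat_iff {a b c j : ℕ} (hj : j ≤ 2 * k)
    (hab : (a : ZMod (2*k)) ≠ (b : ZMod (2*k)))
    (hac : (a : ZMod (2*k)) ≠ (c : ZMod (2*k)))
    (hbc : (b : ZMod (2*k)) ≠ (c : ZMod (2*k))) :
    IsEdge (circPart k (j : ZMod (2*k))) {(a : ZMod (2*k)), (b : ZMod (2*k)), (c : ZMod (2*k))} ↔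
      (pIdx k ((a + 2*k - j) % (2*k)) ≠ pIdx k ((b + 2*k - j) % (2*k)) ∧
       pIdx k ((a + 2*k - j) % (2*k)) ≠ pIdx k ((c + 2*k - j) % (2*k)) ∧
       pIdx k ((b + 2*k - j) % (2*k)) ≠ pIdx k ((c + 2*k - j) % (2*k))) := by
  rw [isEdge_triple _ (fun x => pIdx k ((x - (j : ZMod (2*k))).val))
    (fun x i => mem_circPart hk _ x i) hab hac hbc]
  rw [val_sub_cast hk a j hj, val_sub_cast hk b j hj, val_sub_cast hk c j hj]

end main

section part2
variable {k : ℕ} (hk : 2 ≤ k)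
include hk

lemma cast_k_ne_zero : (k : ZMod (2*k)) ≠ 0 := by
  intro h
  have h2 := congrArg ZMod.val h
  rw [val_k hk, ZMod.val_zero] at h2
  omega

set_option maxHeartbeats 2000000 in
lemma part2 (i a : ℕ) (ha : a < 2 * k)
    (h1 : (a : ZMod (2 * k)) ≠ (i : ZMod (2 * k)))
    (h2 : (a : ZMod (2 * k)) ≠ (i : ZMod (2 * k)) + (k : ZMod (2 * k))) :
    ((Finset.range k).filter fun j : ℕ =>
        IsEdge (circPart k (j : ZMod (2 * k)))
          {(i : ZMod (2 * k)), (i : ZMod (2 * k)) + (k : ZMod (2 * k)), (a : ZMod (2 * k))}) =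
      {a % k} := by
  haveI := neZero2k hk
  set i' := i % (2 * k) with hi'def
  have hi'lt : i' < 2 * k := Nat.mod_lt _ (by omega)
  have hi : (i : ZMod (2 * k)) = (i' : ZMod (2 * k)) := (ZMod.natCast_mod i (2*k)).symm
  rw [hi] at h1 h2
  set i2 := (i' + k) % (2 * k) with hi2def
  have hi2lt : i2 < 2 * k := Nat.mod_lt _ (by omega)
  have s5 : (i2 = i' + k) ∨ (i2 + 2 * k = i' + k) := by
    rcases mod_spec2 (m := i' + k) (n := 2 * k) (by omega) (by omega) with h | h
    · have := h.2; omega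
    · have := h.2; omega
  have hi2 : (i' : ZMod (2 * k)) + (k : ZMod (2 * k)) = (i2 : ZMod (2 * k)) := by
    have hcast : ((i2 : ℕ) : ZMod (2*k)) = ((i' + k : ℕ) : ZMod (2*k)) := by
      rw [hi2def]; exact ZMod.natCast_mod _ _
    rw [hcast]; push_cast; ring
  rw [hi2] at h2
  simp only [hi, hi2]
  -- distinctness
  have hne1 : (i' : ZMod (2*k)) ≠ (i2 : ZMod (2*k)) := by
    rw [← hi2]
    push_cast
    intro h
    exact cast_k_ne_zero hk (by linear_combination -h)
  have hne2 : (i' : ZMod (2*k)) ≠ (a : ZMod (2*k)) := h1.symm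
  have hne3 : (i2 : ZMod (2*k)) ≠ (a : ZMod (2*k)) := h2.symm
  -- ℕ facts
  have ha1 : a ≠ i' := fun h => h1 ((cast_inj_lt hk ha hi'lt).2 h)
  have ha2 : a ≠ i2 := fun h => h2 ((cast_inj_lt hk ha hi2lt).2 h)
  ext j
  simp only [Finset.mem_filter, Finset.mem_range, Finset.mem_singleton]
  have s4 := mod_spec2 (m := a) (n := k) (by omega) (by omega)
  by_cases hjk : j < k
  · rw [isEdge_nat_iff hk (by omega) hne1 hne2 hne3]
    have s1 := mod_spec2 (m := i' + 2*k - j) (n := 2*k) (by omega) (by omega)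
    have s2 := mod_spec2 (m := i2 + 2*k - j) (n := 2*k) (by omega) (by omega)
    have s3 := mod_spec2 (m := a + 2*k - j) (n := 2*k) (by omega) (by omega)
    rw [pIdx_opp_ne_iff k (by omega) (by omega : (i' + 2*k - j) % (2*k) < 2*k)
      (by omega : (i2 + 2*k - j) % (2*k) < 2*k) (by omega : (a + 2*k - j) % (2*k) < 2*k)
      (by omega)]
    clear h1 h2 hi hi2 hne1 hne2 hne3 hi'def hi2def
    omega
  · constructor
    · rintro ⟨h, -⟩; omega
    · intro h; omega

end part2

section part3
variable {k : ℕ} (hk : 2 ≤ k)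
include hk

set_option maxHeartbeats 4000000 in
lemma part3_set (b c : ℕ) (hb0 : 0 < b) (hbk : b < k) (hkc : k < c) (hc2k : c < 2 * k)
    (hcbk : c ≠ b + k) :
    ((Finset.range k).filter fun i : ℕ =>
        IsEdge (circPart k (i : ZMod (2 * k)))
          {(0 : ZMod (2 * k)), (b : ZMod (2 * k)), (c : ZMod (2 * k))}) =
      (if c < k + b then ({0, b, c - k} : Finset ℕ) else {0}) := by
  haveI := neZero2k hk
  have h0cast : (0 : ZMod (2 * k)) = ((0 : ℕ) : ZMod (2 * k)) := by norm_num
  have hne1 : ((0:ℕ) : ZMod (2*k)) ≠ (b : ZMod (2*k)) := by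
    rw [Ne, cast_inj_lt hk (by omega) (by omega)]; omega
  have hne2 : ((0:ℕ) : ZMod (2*k)) ≠ (c : ZMod (2*k)) := by
    rw [Ne, cast_inj_lt hk (by omega) (by omega)]; omega
  have hne3 : (b : ZMod (2*k)) ≠ (c : ZMod (2*k)) := by
    rw [Ne, cast_inj_lt hk (by omega) (by omega)]; omega
  ext j
  simp only [Finset.mem_filter, Finset.mem_range]
  by_cases hjk : j < k
  · have key : IsEdge (circPart k (j : ZMod (2 * k)))
        {(0 : ZMod (2 * k)), (b : ZMod (2 * k)), (c : ZMod (2 * k))} ↔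
        (pIdx k ((0 + 2*k - j) % (2*k)) ≠ pIdx k ((b + 2*k - j) % (2*k)) ∧
         pIdx k ((0 + 2*k - j) % (2*k)) ≠ pIdx k ((c + 2*k - j) % (2*k)) ∧
         pIdx k ((b + 2*k - j) % (2*k)) ≠ pIdx k ((c + 2*k - j) % (2*k))) := by
      rw [h0cast]
      exact isEdge_nat_iff hk (by omega) hne1 hne2 hne3
    rw [key]
    simp only [pIdx_ne_iff]
    have s1 := mod_spec2 (m := 0 + 2*k - j) (n := 2*k) (by omega) (by omega)
    have s2 := mod_spec2 (m := b + 2*k - j) (n := 2*k) (by omega) (by omega)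
    have s3 := mod_spec2 (m := c + 2*k - j) (n := 2*k) (by omega) (by omega)
    split_ifs with hcase
    · simp only [Finset.mem_insert, Finset.mem_singleton]
      omega
    · simp only [Finset.mem_singleton]
      omega
  · split_ifs with hcase
    · simp only [Finset.mem_insert, Finset.mem_singleton]
      constructor
      · rintro ⟨h, -⟩; omega
      · intro h; omega
    · simp only [Finset.mem_singleton]
      constructor
      · rintro ⟨h, -⟩; omega
      · intro h; omega

lemma part3 (b c : ℕ) (hb0 : 0 < b) (hbk : b < k) (hkc : k < c) (hc2k : c < 2 * k)
    (hcbk : c ≠ b + k) :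
    (((Finset.range k).filter fun i : ℕ =>
        IsEdge (circPart k (i : ZMod (2 * k)))
          {(0 : ZMod (2 * k)), (b : ZMod (2 * k)), (c : ZMod (2 * k))}).card) =
      if k < c ∧ c < k + b then 3 else 1 := by
  rw [part3_set hk b c hb0 hbk hkc hc2k hcbk]
  by_cases hcase : c < k + b
  · rw [if_pos hcase, if_pos ⟨hkc, by omega⟩]
    rw [Finset.card_insert_of_notMem (by simp; omega), Finset.card_insert_of_notMem (by simp; omega)]
    simp
  · rw [if_neg hcase, if_neg (by omega)]
    simp

end part3

def sw3 : Fin 3 → Fin 3 := ![0, 2, 1]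

lemma sw3_sw3 : ∀ i, sw3 (sw3 i) = i := by decide

section trans
variable {k : ℕ} (hk : 2 ≤ k)
include hk

lemma circPart_add (j t : ZMod (2*k)) (i : Fin 3) :
    circPart k (j + t) i = (circPart k j i).image (· + t) := by
  ext x
  rw [mem_circPart hk, Finset.mem_image]
  constructor
  · intro h
    refine ⟨x - t, ?_, by ring⟩
    rw [mem_circPart hk]
    have harg : x - t - j = x - (j + t) := by ring
    rw [harg]; exact h
  · rintro ⟨y, hy, rfl⟩
    rw [mem_circPart hk] at hy
    have harg : y + t - (j + t) = y - j := by ring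
    rw [harg]; exact hy

lemma isEdge_image_add (j t : ZMod (2*k)) (e : Finset (ZMod (2*k))) :
    IsEdge (circPart k (j + t)) (e.image (· + t)) ↔ IsEdge (circPart k j) e := by
  have hinj : Function.Injective (· + t) := add_left_injective t
  have key : ∀ i, ((e.image (· + t)) ∩ circPart k (j + t) i).card = (e ∩ circPart k j i).card := by
    intro i
    rw [circPart_add hk, ← Finset.image_inter _ _ hinj, Finset.card_image_of_injective _ hinj]
  unfold IsEdge
  simp only [key]

lemma pIdx_addk {v : ℕ} (hv : v < 2*k) : pIdx k ((v + k) % (2*k)) = sw3 (pIdx k v) := by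
  have hs : (v + k) % (2*k) = if v < k then v + k else v - k := by
    rcases mod_spec2 (m := v + k) (n := 2*k) (by omega) (by omega) with ⟨h1, h2⟩ | ⟨h1, h2⟩ <;>
      split_ifs <;> omega
  rw [hs]
  unfold pIdx sw3
  split_ifs <;> first | rfl | omega | (exfalso; omega)

lemma isEdge_addk (j : ZMod (2*k)) (e : Finset (ZMod (2*k))) :
    IsEdge (circPart k (j + (k : ZMod (2*k)))) e ↔ IsEdge (circPart k j) e := by
  haveI := neZero2k hk
  have hpart : ∀ i, circPart k (j + (k : ZMod (2*k))) i = circPart k j (sw3 i) := by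
    intro i
    ext x
    rw [mem_circPart hk, mem_circPart hk]
    have harg : x - (j + (k : ZMod (2*k))) = (((x - j).val + k : ℕ) : ZMod (2*k)) := by
      rw [Nat.cast_add, cast_val_zmod hk]
      have h2k : ((2*k : ℕ) : ZMod (2*k)) = 0 := ZMod.natCast_self _
      push_cast at h2k
      linear_combination -h2k
    rw [harg, ZMod.val_natCast, pIdx_addk hk (ZMod.val_lt _)]
    constructor
    · intro h
      have h' := congrArg sw3 h
      rwa [sw3_sw3] at h'
    · intro h
      rw [h, sw3_sw3]
  unfold IsEdge
  constructor
  · intro h i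
    have h' := h (sw3 i)
    rw [hpart, sw3_sw3] at h'
    exact h'
  · intro h i
    rw [hpart]
    exact h (sw3 i)

lemma cnt_double (e : Finset (ZMod (2*k))) :
    ((Finset.range (2*k)).filter fun i : ℕ => IsEdge (circPart k (i : ZMod (2*k))) e).card
      = 2 * ((Finset.range k).filter fun i : ℕ => IsEdge (circPart k (i : ZMod (2*k))) e).card := by
  rw [Finset.card_filter, Finset.card_filter]
  have hr : Finset.range (2*k) = Finset.range (k+k) := by rw [two_mul]
  rw [hr, Finset.sum_range_add]
  have hs : ∀ i ∈ Finset.range k,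
      (if IsEdge (circPart k ((k + i : ℕ) : ZMod (2*k))) e then 1 else 0) =
      (if IsEdge (circPart k (i : ZMod (2*k))) e then 1 else 0) := by
    intro i _
    have hcast : ((k + i : ℕ) : ZMod (2*k)) = (i : ZMod (2*k)) + (k : ZMod (2*k)) := by
      push_cast; ring
    rw [hcast]
    simp only [isEdge_addk hk]
  rw [Finset.sum_congr rfl hs]
  omega

lemma cnt_zmod [NeZero (2*k)] (e : Finset (ZMod (2*k))) :
    ((Finset.range (2*k)).filter fun i : ℕ => IsEdge (circPart k (i : ZMod (2*k))) e).card
      = (Finset.univ.filter fun j : ZMod (2*k) => IsEdge (circPart k j) e).card := by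
  haveI := neZero2k hk
  apply Finset.card_bij (fun (i : ℕ) _ => (i : ZMod (2*k)))
  · intro a ha
    simp only [Finset.mem_filter, Finset.mem_range] at ha ⊢
    exact ⟨Finset.mem_univ _, ha.2⟩
  · intro a ha b hb h
    simp only [Finset.mem_filter, Finset.mem_range] at ha hb
    exact (cast_inj_lt hk ha.1 hb.1).1 h
  · intro b hb
    simp only [Finset.mem_filter, Finset.mem_range] at hb ⊢
    exact ⟨b.val, ⟨ZMod.val_lt _, by rw [cast_val_zmod hk]; exact hb.2⟩, cast_val_zmod hk b⟩

lemma cnt_univ_image [NeZero (2*k)] (e : Finset (ZMod (2*k))) (t : ZMod (2*k)) :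
    (Finset.univ.filter fun j : ZMod (2*k) => IsEdge (circPart k j) (e.image (· + t))).card
      = (Finset.univ.filter fun j : ZMod (2*k) => IsEdge (circPart k j) e).card := by
  apply Finset.card_bij (fun (j : ZMod (2*k)) _ => j - t)
  · intro a ha
    simp only [Finset.mem_filter] at ha ⊢
    refine ⟨Finset.mem_univ _, ?_⟩
    have := (isEdge_image_add hk (a - t) t e)
    rw [show a - t + t = a by ring] at this
    exact this.1 ha.2
  · intro a _ b _ h
    have : a - t + t = b - t + t := by rw [h]
    simpa using this
  · intro b hb
    simp only [Finset.mem_filter] at hb ⊢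
    refine ⟨b + t, ⟨Finset.mem_univ _, ?_⟩, by ring⟩
    exact (isEdge_image_add hk b t e).2 hb.2

lemma cnt_image_add (e : Finset (ZMod (2*k))) (t : ZMod (2*k)) :
    ((Finset.range k).filter fun i : ℕ => IsEdge (circPart k (i : ZMod (2*k))) (e.image (· + t))).card
      = ((Finset.range k).filter fun i : ℕ => IsEdge (circPart k (i : ZMod (2*k))) e).card := by
  haveI := neZero2k hk
  have h1 := cnt_double hk (e.image (· + t))
  have h2 := cnt_double hk e
  have h3 := cnt_zmod hk (e.image (· + t))
  have h4 := cnt_zmod hk e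
  have h5 := cnt_univ_image hk e t
  omega

end trans

section part1
variable {k : ℕ} (hk : 2 ≤ k)
include hk

lemma part2' (x a : ZMod (2*k)) (h1 : a ≠ x) (h2 : a ≠ x + (k : ZMod (2*k))) :
    ((Finset.range k).filter fun j : ℕ =>
      IsEdge (circPart k (j : ZMod (2*k))) {x, x + (k : ZMod (2*k)), a}) = {a.val % k} := by
  haveI := neZero2k hk
  have h := part2 hk x.val a.val (ZMod.val_lt a)
    (by rw [cast_val_zmod hk, cast_val_zmod hk]; exact h1)
    (by rw [cast_val_zmod hk, cast_val_zmod hk]; exact h2)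
  rwa [cast_val_zmod hk, cast_val_zmod hk] at h

lemma hopp (x y z : ZMod (2*k)) (hxy : x ≠ y) (hxz : x ≠ z) (hyz : y ≠ z)
    (hy : y = x + (k : ZMod (2*k))) :
    Odd (((Finset.range k).filter fun i : ℕ =>
      IsEdge (circPart k (i : ZMod (2*k))) {x, y, z}).card) := by
  subst hy
  rw [part2' hk x z (Ne.symm hxz) (Ne.symm hyz)]
  simp

lemma main_case (x y z : ZMod (2*k)) (t : ZMod (2*k)) (b c : ℕ)
    (hb0 : 0 < b) (hbk : b < k) (hkc : k < c) (hc2 : c < 2*k) (hcb : c ≠ b + k)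
    (hset : ({x, y, z} : Finset (ZMod (2*k))) =
      ({(0 : ZMod (2*k)), (b : ZMod (2*k)), (c : ZMod (2*k))} : Finset (ZMod (2*k))).image (· + t)) :
    Odd (((Finset.range k).filter fun i : ℕ =>
      IsEdge (circPart k (i : ZMod (2*k))) {x, y, z}).card) := by
  rw [hset, cnt_image_add hk, part3 hk b c hb0 hbk hkc hc2 hcb]
  split_ifs <;> decide

set_option maxHeartbeats 2000000 in
lemma part1 (e : Finset (ZMod (2*k))) (he : e.card = 3) :
    Odd (((Finset.range k).filter fun i : ℕ =>
      IsEdge (circPart k (i : ZMod (2*k))) e).card) := by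
  haveI := neZero2k hk
  obtain ⟨x, y, z, hxy, hxz, hyz, rfl⟩ := Finset.card_eq_three.1 he
  by_cases hy : y = x + (k : ZMod (2*k))
  · exact hopp hk x y z hxy hxz hyz hy
  by_cases hz : z = x + (k : ZMod (2*k))
  · have hset : ({x, y, z} : Finset (ZMod (2*k))) = {x, z, y} := by
      ext w; simp only [Finset.mem_insert, Finset.mem_singleton]; tauto
    rw [hset]
    exact hopp hk x z y hxz hxy (Ne.symm hyz) hz
  by_cases hz2 : z = y + (k : ZMod (2*k))
  · have hset : ({x, y, z} : Finset (ZMod (2*k))) = {y, z, x} := by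
      ext w; simp only [Finset.mem_insert, Finset.mem_singleton]; tauto
    rw [hset]
    exact hopp hk y z x hyz (Ne.symm hxy) (Ne.symm hxz) hz2
  -- no opposite pair
  set d1 := (y - x).val with hd1def
  set d2 := (z - x).val with hd2def
  have h2k0 : ((2*k : ℕ) : ZMod (2*k)) = 0 := ZMod.natCast_self _
  have hcv1 : ((d1 : ℕ) : ZMod (2*k)) = y - x := cast_val_zmod hk _
  have hcv2 : ((d2 : ℕ) : ZMod (2*k)) = z - x := cast_val_zmod hk _
  have hd1lt : d1 < 2*k := ZMod.val_lt _
  have hd2lt : d2 < 2*k := ZMod.val_lt _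
  have hd10 : d1 ≠ 0 := by
    intro h
    apply hxy
    have h0 : y - x = 0 := by rwa [← ZMod.val_eq_zero]
    linear_combination -h0
  have hd20 : d2 ≠ 0 := by
    intro h
    apply hxz
    have h0 : z - x = 0 := by rwa [← ZMod.val_eq_zero]
    linear_combination -h0
  have hd1k : d1 ≠ k := by
    intro h
    apply hy
    have h0 : y - x = (k : ZMod (2*k)) := (val_eq_k_iff hk _).1 h
    linear_combination h0
  have hd2k : d2 ≠ k := by
    intro h
    apply hz
    have h0 : z - x = (k : ZMod (2*k)) := (val_eq_k_iff hk _).1 h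
    linear_combination h0
  have hd12 : d1 ≠ d2 := by
    intro h
    apply hyz
    have h0 : ((d1 : ℕ) : ZMod (2*k)) = ((d2 : ℕ) : ZMod (2*k)) := by rw [h]
    rw [hcv1, hcv2] at h0
    linear_combination h0
  have hzy : z - y = ((d2 : ℕ) : ZMod (2*k)) - ((d1 : ℕ) : ZMod (2*k)) := by
    rw [hcv1, hcv2]; ring
  have hzk : (d2 + 2*k - d1) % (2*k) ≠ k := by
    intro h
    apply hz2
    have h0 : z - y = (k : ZMod (2*k)) := by
      rw [← val_eq_k_iff hk, hzy, val_sub_cast hk d2 d1 (by omega), h]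
    linear_combination h0
  have hs := mod_spec2 (m := d2 + 2*k - d1) (n := 2*k) (by omega) (by omega)
  -- helper to prove the element equalities
  have hsub1 : ∀ m : ℕ, m ≤ 2*k → ((2*k - m : ℕ) : ZMod (2*k)) = -((m : ℕ) : ZMod (2*k)) := by
    intro m hm
    rw [Nat.cast_sub hm, h2k0]
    ring
  rcases Nat.lt_or_ge d1 k with h1k | h1k <;> rcases Nat.lt_or_ge d2 k with h2k | h2k
  · -- C: d1 < k, d2 < k
    rcases Nat.lt_or_ge d1 d2 with h12 | h12
    · -- C1: t = y, b = d2 - d1, c = 2k - d1, elements y, z, x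
      apply main_case hk x y z y (d2 - d1) (2*k - d1) (by omega) (by omega) (by omega)
        (by omega) (by omega)
      rw [Finset.image_insert, Finset.image_insert, Finset.image_singleton]
      have e1 : (0 : ZMod (2*k)) + y = y := by ring
      have e2 : ((d2 - d1 : ℕ) : ZMod (2*k)) + y = z := by
        rw [Nat.cast_sub (by omega), hcv1, hcv2]; ring
      have e3 : ((2*k - d1 : ℕ) : ZMod (2*k)) + y = x := by
        rw [hsub1 d1 (by omega), hcv1]; ring
      rw [e1, e2, e3]
      ext w; simp only [Finset.mem_insert, Finset.mem_singleton]; tauto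
    · -- C2: t = z, b = d1 - d2, c = 2k - d2, elements z, y, x
      apply main_case hk x y z z (d1 - d2) (2*k - d2) (by omega) (by omega) (by omega)
        (by omega) (by omega)
      rw [Finset.image_insert, Finset.image_insert, Finset.image_singleton]
      have e1 : (0 : ZMod (2*k)) + z = z := by ring
      have e2 : ((d1 - d2 : ℕ) : ZMod (2*k)) + z = y := by
        rw [Nat.cast_sub (by omega), hcv1, hcv2]; ring
      have e3 : ((2*k - d2 : ℕ) : ZMod (2*k)) + z = x := by
        rw [hsub1 d2 (by omega), hcv2]; ring
      rw [e1, e2, e3]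
      ext w; simp only [Finset.mem_insert, Finset.mem_singleton]; tauto
  · -- A: d1 < k < d2
    apply main_case hk x y z x d1 d2 (by omega) (by omega) (by omega) (by omega) (by omega)
    rw [Finset.image_insert, Finset.image_insert, Finset.image_singleton]
    have e1 : (0 : ZMod (2*k)) + x = x := by ring
    have e2 : ((d1 : ℕ) : ZMod (2*k)) + x = y := by rw [hcv1]; ring
    have e3 : ((d2 : ℕ) : ZMod (2*k)) + x = z := by rw [hcv2]; ring
    rw [e1, e2, e3]
  · -- B: d2 < k < d1
    apply main_case hk x y z x d2 d1 (by omega) (by omega) (by omega) (by omega) (by omega)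
    rw [Finset.image_insert, Finset.image_insert, Finset.image_singleton]
    have e1 : (0 : ZMod (2*k)) + x = x := by ring
    have e2 : ((d2 : ℕ) : ZMod (2*k)) + x = z := by rw [hcv2]; ring
    have e3 : ((d1 : ℕ) : ZMod (2*k)) + x = y := by rw [hcv1]; ring
    rw [e1, e2, e3]
    ext w; simp only [Finset.mem_insert, Finset.mem_singleton]; tauto
  · -- D: k < d1, k < d2
    rcases Nat.lt_or_ge d1 d2 with h12 | h12
    · -- D1: t = z, b = 2k - d2, c = 2k + d1 - d2, elements z, x, y
      apply main_case hk x y z z (2*k - d2) (2*k + d1 - d2) (by omega) (by omega) (by omega)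
        (by omega) (by omega)
      rw [Finset.image_insert, Finset.image_insert, Finset.image_singleton]
      have e1 : (0 : ZMod (2*k)) + z = z := by ring
      have e2 : ((2*k - d2 : ℕ) : ZMod (2*k)) + z = x := by
        rw [hsub1 d2 (by omega), hcv2]; ring
      have e3 : ((2*k + d1 - d2 : ℕ) : ZMod (2*k)) + z = y := by
        have hc : ((2*k + d1 - d2 : ℕ) : ZMod (2*k)) =
            ((d1 : ℕ) : ZMod (2*k)) - ((d2 : ℕ) : ZMod (2*k)) := by
          rw [Nat.cast_sub (by omega)]
          push_cast
          push_cast at h2k0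
          linear_combination h2k0
        rw [hc, hcv1, hcv2]
        ring
      rw [e1, e2, e3]
      ext w; simp only [Finset.mem_insert, Finset.mem_singleton]; tauto
    · -- D2: t = y, b = 2k - d1, c = 2k + d2 - d1, elements y, x, z
      apply main_case hk x y z y (2*k - d1) (2*k + d2 - d1) (by omega) (by omega) (by omega)
        (by omega) (by omega)
      rw [Finset.image_insert, Finset.image_insert, Finset.image_singleton]
      have e1 : (0 : ZMod (2*k)) + y = y := by ring
      have e2 : ((2*k - d1 : ℕ) : ZMod (2*k)) + y = x := by
        rw [hsub1 d1 (by omega), hcv1]; ring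
      have e3 : ((2*k + d2 - d1 : ℕ) : ZMod (2*k)) + y = z := by
        have hc : ((2*k + d2 - d1 : ℕ) : ZMod (2*k)) =
            ((d2 : ℕ) : ZMod (2*k)) - ((d1 : ℕ) : ZMod (2*k)) := by
          rw [Nat.cast_sub (by omega)]
          push_cast
          push_cast at h2k0
          linear_combination h2k0
        rw [hc, hcv1, hcv2]
        ring
      rw [e1, e2, e3]
      ext w; simp only [Finset.mem_insert, Finset.mem_singleton]; tauto

end part1


/-- The circular hypergraphs `H_0, …, H_{k-1}` odd-cover `K_{2k}^{(3)}`; moreover a 3-set with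
an opposite pair `{i, i+k, a}` lies in exactly `H_{a mod k}`, and a 3-set `{0, b, c}` with no
opposite pair lies in three of them if `k < c < k + b` and in exactly one otherwise. -/
theorem stmt1 (k : ℕ) (hk : 2 ≤ k) :
    (∀ e : Finset (ZMod (2 * k)), e.card = 3 →
      Odd (((Finset.range k).filter fun i : ℕ => IsEdge (circPart k (i : ZMod (2 * k))) e).card)) ∧
    (∀ i a : ℕ, a < 2 * k →
      (a : ZMod (2 * k)) ≠ (i : ZMod (2 * k)) →
      (a : ZMod (2 * k)) ≠ (i : ZMod (2 * k)) + (k : ZMod (2 * k)) →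
      ((Finset.range k).filter fun j : ℕ =>
          IsEdge (circPart k (j : ZMod (2 * k)))
            {(i : ZMod (2 * k)), (i : ZMod (2 * k)) + (k : ZMod (2 * k)), (a : ZMod (2 * k))}) =
        {a % k}) ∧
    (∀ b c : ℕ, 0 < b → b < k → k < c → c < 2 * k → c ≠ b + k →
      (((Finset.range k).filter fun i : ℕ =>
          IsEdge (circPart k (i : ZMod (2 * k)))
            {(0 : ZMod (2 * k)), (b : ZMod (2 * k)), (c : ZMod (2 * k))}).card) =
        if k < c ∧ c < k + b then 3 else 1) := by
  refine ⟨fun e he => part1 hk e he, fun i a ha h1 h2 => part2 hk i a ha h1 h2,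
    fun b c hb0 hbk hkc hc2k hcbk => part3 hk b c hb0 hbk hkc hc2k hcbk⟩
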